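/- Let D=(V,A) be a directed acyclic graph with source s and f: A → {0,…,k}. If g and g' are both fan-extensions of f, then the pointwise maximum of g and g' is also a fan-extension of f. Consequently, if f admits any fan-extension, it admits a unique maximal fan-extension g* with g*(v) ≥ g(v) for every fan-extension g and every node v. -/
import Mathlib


/-- A non-trivial monotone path (w.r.t. the arc labelling `f`). -/
def IsMonoPath {V : Type*} (A : Finset (V × V)) (f : V × V → ℕ)
    (l : List (V × V)) : Prop :=
  l ≠ [] ∧ (∀ a ∈ l, a ∈ A) ∧ l.Chain' (fun a b => a.2 = b.1 ∧ f a ≤ f b)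

/-- An `i`-fan of `v` w.r.t. `f` and `g`. -/
def IsFan {V : Type*} (A : Finset (V × V)) (f : V × V → ℕ) (g : V → ℕ)
    (i : ℕ) (v : V) (P : Fin i → List (V × V)) : Prop :=
  (∀ j, IsMonoPath A f (P j)) ∧
  (∀ j, (P j).getLast?.map Prod.snd = some v) ∧
  (∀ j j', j ≠ j' → ∀ a ∈ P j, a ∉ P j') ∧
  (∀ j, ∀ a ∈ (P j).head?, (j : ℕ) + 1 ≤ f a ∧ f a ≤ g a.1) ∧
  (∀ j, ∀ a ∈ (P j).getLast?, f a ≤ i)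

/-- `g` is a fan-extension of `f`: every node `v` with `g(v) > 0` has a `g(v)`-fan,
and every arc `vw` is either free (`f(vw) ≤ g(v)`) or has an entering arc `uv`
with `f(uv) = f(vw)`. -/
def IsFanExt {V : Type*} (A : Finset (V × V)) (f : V × V → ℕ) (g : V → ℕ) : Prop :=
  (∀ v, 0 < g v → ∃ P : Fin (g v) → List (V × V), IsFan A f g (g v) v P) ∧
  (∀ a ∈ A, f a ≤ g a.1 ∨ ∃ b ∈ A, b.2 = a.1 ∧ f b = f a)


theorem fan_mono {V : Type*} {A : Finset (V × V)} {f : V × V → ℕ} {g g' : V → ℕ}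
    (hgg : ∀ v, g v ≤ g' v) {i : ℕ} {v : V} {P : Fin i → List (V × V)}
    (h : IsFan A f g i v P) : IsFan A f g' i v P := by
  obtain ⟨h1, h2, h3, h4, h5⟩ := h
  exact ⟨h1, h2, h3, fun j a ha => ⟨(h4 j a ha).1, (h4 j a ha).2.trans (hgg _)⟩, h5⟩

theorem fanExt_max {V : Type*} {A : Finset (V × V)} {f : V × V → ℕ} {g g' : V → ℕ}
    (hg : IsFanExt A f g) (hg' : IsFanExt A f g') :
    IsFanExt A f (fun v => max (g v) (g' v)) := by
  constructor
  · intro v hv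
    simp only at hv ⊢
    rcases le_total (g' v) (g v) with h | h
    · have hmax : max (g v) (g' v) = g v := max_eq_left h
      rw [hmax] at hv ⊢
      obtain ⟨P, hP⟩ := hg.1 v hv
      exact ⟨P, fan_mono (fun w => le_max_left _ _) hP⟩
    · have hmax : max (g v) (g' v) = g' v := max_eq_right h
      rw [hmax] at hv ⊢
      obtain ⟨P, hP⟩ := hg'.1 v hv
      exact ⟨P, fan_mono (fun w => le_max_right _ _) hP⟩
  · intro a ha
    rcases hg.2 a ha with h | h
    · exact Or.inl (h.trans (le_max_left _ _))
    · exact Or.inr h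

theorem fanExt_le {V : Type*} {A : Finset (V × V)} {f : V × V → ℕ} {k : ℕ}
    (hfk : ∀ a ∈ A, f a ≤ k) {h : V → ℕ} (hh : IsFanExt A f h) (v : V) :
    h v ≤ k := by
  by_contra hlt
  push_neg at hlt
  have hv : 0 < h v := lt_of_le_of_lt (Nat.zero_le k) hlt
  obtain ⟨P, hP⟩ := hh.1 v hv
  set j : Fin (h v) := ⟨h v - 1, Nat.sub_lt hv one_pos⟩ with hj
  have hne : P j ≠ [] := (hP.1 j).1
  set a : V × V := (P j).head hne with haa
  have hhead : a ∈ (P j).head? := by rw [List.head?_eq_head hne]; rfl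
  have h4 := (hP.2.2.2.1 j a hhead).1
  have haA : a ∈ A := (hP.1 j).2.1 a (List.head_mem hne)
  have : h v ≤ f a := by
    have : (j : ℕ) + 1 = h v := Nat.succ_pred_eq_of_pos hv
    omega
  have := hfk a haA
  omega

/-- If `g` and `g'` are fan-extensions of `f`, so is their pointwise maximum;
consequently (as `f` admits a fan-extension) `f` admits a unique maximal
fan-extension `g*` with `g*(v) ≥ g(v)` for every fan-extension `g` and node `v`. -/
theorem max_fanExt {V : Type*} [Fintype V] [DecidableEq V]
    (A : Finset (V × V)) (f : V × V → ℕ) (k : ℕ)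
    (ord : V → ℕ) (hord : ∀ a ∈ A, ord a.1 < ord a.2)
    (hfk : ∀ a ∈ A, f a ≤ k)
    (g g' : V → ℕ) (hgk : ∀ v, g v ≤ k) (hg'k : ∀ v, g' v ≤ k)
    (hg : IsFanExt A f g) (hg' : IsFanExt A f g') :
    IsFanExt A f (fun v => max (g v) (g' v)) ∧
    ∃ gmax : V → ℕ, IsFanExt A f gmax ∧
      ∀ h : V → ℕ, IsFanExt A f h → ∀ v, h v ≤ gmax v := by
  classical
  refine ⟨fanExt_max hg hg', ?_⟩
  have hbd : ∀ h : V → ℕ, IsFanExt A f h → ∀ v, h v ≤ k :=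
    fun h hh v => fanExt_le hfk hh v
  let S : Finset (V → ℕ) :=
    ((Finset.univ : Finset (V → Fin (k+1))).image
      (fun h => fun v => ((h v : ℕ)))).filter (IsFanExt A f)
  have hmemS : ∀ h : V → ℕ, IsFanExt A f h → h ∈ S := by
    intro h hh
    refine Finset.mem_filter.2 ⟨Finset.mem_image.2
      ⟨fun v => ⟨h v, Nat.lt_succ_of_le (hbd h hh v)⟩, Finset.mem_univ _, rfl⟩, hh⟩
  have hSne : S.Nonempty := ⟨g, hmemS g hg⟩
  have hmemFE : ∀ h ∈ S, IsFanExt A f (id h) := fun h hh => (Finset.mem_filter.1 hh).2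
  refine ⟨S.sup' hSne id, ?_, ?_⟩
  · refine Finset.sup'_induction hSne id ?_ hmemFE
    intro a ha b hb
    have hm := fanExt_max ha hb
    have : a ⊔ b = fun v => max (a v) (b v) := rfl
    rw [this]
    exact hm
  · intro h hh v
    exact (Finset.le_sup' id (hmemS h hh) : h ≤ S.sup' hSne id) v
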